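/- Let H be a k-uniform hypergraph with m edges and incidence matrix B of rank r. Then BE(H) ≤ √(kmr) ≤ √k · m, with equality if and only if H consists of pairwise disjoint edges. -/

import Mathlib

open Matrix BigOperators Finset

/-- Incidence matrix of a hypergraph on vertex set `Fin n` with edges `E : Fin m → Finset (Fin n)`. -/
noncomputable def inc {n m : ℕ} (E : Fin m → Finset (Fin n)) : Matrix (Fin n) (Fin m) ℝ :=
  fun v e => if v ∈ E e then 1 else 0

/-- Adjacency matrix of the line multigraph: `(e,f)`-entry is `|E e ∩ E f|` for `e ≠ f`, `0` on diagonal. -/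
noncomputable def lineAdj {n m : ℕ} (E : Fin m → Finset (Fin n)) : Matrix (Fin m) (Fin m) ℝ :=
  fun e f => if e = f then 0 else ((E e ∩ E f).card : ℝ)

/-- Adjacency matrix of the clique multigraph: `(u,v)`-entry is the number of edges containing both. -/
noncomputable def cliqueAdj {n m : ℕ} (E : Fin m → Finset (Fin n)) : Matrix (Fin n) (Fin n) ℝ :=
  fun u v => if u = v then 0 else ((univ.filter fun e => u ∈ E e ∧ v ∈ E e).card : ℝ)

/-- Degree of a vertex: number of edges containing it. -/
def deg {n m : ℕ} (E : Fin m → Finset (Fin n)) (v : Fin n) : ℕ :=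
  (univ.filter fun e => v ∈ E e).card

lemma inc_tr_mul {n m : ℕ} (E : Fin m → Finset (Fin n)) (e f : Fin m) :
    ((inc E)ᵀ * inc E) e f = ((E e ∩ E f).card : ℝ) := by
  classical
  simp only [Matrix.mul_apply, transpose_apply, inc, ite_mul, one_mul, zero_mul, ← ite_and]
  rw [Finset.sum_boole]
  congr 1
  congr 1
  ext x
  simp

lemma trace_eq_sum_eigs {N : Type*} [Fintype N] [DecidableEq N] {A : Matrix N N ℝ}
    (hA : A.IsHermitian) : A.trace = ∑ i, hA.eigenvalues i := by
  nth_rewrite 1 [hA.spectral_theorem]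
  rw [Unitary.conjStarAlgAut_apply]
  rw [Matrix.trace_mul_cycle,
    show (star (hA.eigenvectorUnitary : Matrix N N ℝ)) * (hA.eigenvectorUnitary : Matrix N N ℝ) = 1
      from (Matrix.mem_unitaryGroup_iff'.mp (hA.eigenvectorUnitary).2),
    one_mul, Matrix.trace_diagonal]
  simp

lemma trace_sq_eq_sum_eigs_sq {N : Type*} [Fintype N] [DecidableEq N] {A : Matrix N N ℝ}
    (hA : A.IsHermitian) : (A * A).trace = ∑ i, hA.eigenvalues i ^ 2 := by
  have h2 : star (hA.eigenvectorUnitary : Matrix N N ℝ) * (hA.eigenvectorUnitary : Matrix N N ℝ) = 1 :=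
    Matrix.mem_unitaryGroup_iff'.mp (hA.eigenvectorUnitary).2
  have key : (A * A) = (hA.eigenvectorUnitary : Matrix N N ℝ) *
      (diagonal (RCLike.ofReal ∘ hA.eigenvalues) * diagonal (RCLike.ofReal ∘ hA.eigenvalues)) *
      star (hA.eigenvectorUnitary : Matrix N N ℝ) := by
    conv_lhs => rw [hA.spectral_theorem, Unitary.conjStarAlgAut_apply]
    simp only [Matrix.mul_assoc]
    rw [show star (hA.eigenvectorUnitary : Matrix N N ℝ) *
        ((hA.eigenvectorUnitary : Matrix N N ℝ) * (diagonal (RCLike.ofReal ∘ hA.eigenvalues) *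
          star (hA.eigenvectorUnitary : Matrix N N ℝ))) =
        diagonal (RCLike.ofReal ∘ hA.eigenvalues) * star (hA.eigenvectorUnitary : Matrix N N ℝ) by
      rw [← Matrix.mul_assoc, h2, one_mul]]
  rw [key, Matrix.trace_mul_cycle, ← Matrix.mul_assoc, h2, one_mul, diagonal_mul_diagonal,
    Matrix.trace_diagonal]
  simp [sq]

/-- `BE(H) ≤ √(kmr) ≤ √k · m` where `r = rank B`, with equality iff
the edges of `H` are pairwise disjoint. -/
theorem stmt8 {n m k : ℕ} (E : Fin m → Finset (Fin n))
    (hk2 : 2 ≤ k) (hk : ∀ e, (E e).card = k)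
    (hQ : (inc E * (inc E)ᵀ).IsHermitian)
    (r : ℕ) (hr : r = (inc E).rank) :
    (∑ i, Real.sqrt (hQ.eigenvalues i)) ≤ Real.sqrt (k * m * r) ∧
    Real.sqrt (k * m * r) ≤ Real.sqrt k * m ∧
    ((∑ i, Real.sqrt (hQ.eigenvalues i)) = Real.sqrt k * m ↔
      ∀ e f : Fin m, e ≠ f → Disjoint (E e) (E f)) := by
  classical
  set lam := hQ.eigenvalues with hlam
  have hkR : (0:ℝ) < k := by exact_mod_cast lt_of_lt_of_le (by norm_num) hk2
  have hPSD : (inc E * (inc E)ᵀ).PosSemidef := by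
    have h := Matrix.posSemidef_self_mul_conjTranspose (inc E)
    rwa [Matrix.conjTranspose_eq_transpose_of_trivial] at h
  have hnn : ∀ i, 0 ≤ lam i := fun i => hPSD.eigenvalues_nonneg i
  -- S : support of nonzero eigenvalues
  set S : Finset (Fin n) := univ.filter (fun i => lam i ≠ 0) with hS
  have hS0 : ∀ i ∉ S, lam i = 0 := by
    intro i hi
    by_contra h
    exact hi (Finset.mem_filter.mpr ⟨Finset.mem_univ i, h⟩)
  have hrS : S.card = r := by
    rw [hr, ← Matrix.rank_self_mul_transpose (inc E), hQ.rank_eq_card_non_zero_eigs,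
      Fintype.card_subtype]
  have hrm : r ≤ m := by
    rw [hr]
    exact le_trans (Matrix.rank_le_card_width (inc E)) (by simp)
  -- sums over S equal full sums
  have hsqrtS : ∑ i ∈ S, Real.sqrt (lam i) = ∑ i, Real.sqrt (lam i) :=
    Finset.sum_filter_of_ne (fun i _ h h0 => h (by rw [h0, Real.sqrt_zero]))
  have hlamS : ∑ i ∈ S, lam i = ∑ i, lam i :=
    Finset.sum_filter_of_ne (fun i _ h => h)
  have hlam2S : ∑ i ∈ S, lam i ^ 2 = ∑ i, lam i ^ 2 :=
    Finset.sum_filter_of_ne (fun i _ h h0 => h (by rw [h0]; ring))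
  -- trace : sum of eigenvalues = m * k
  have htr : ∑ i, lam i = (m : ℝ) * k := by
    rw [← trace_eq_sum_eigs hQ, Matrix.trace_mul_comm]
    simp only [Matrix.trace, Matrix.diag, inc_tr_mul, Finset.inter_self, hk]
    simp [mul_comm]
  -- trace of square
  have htr2 : ∑ i, lam i ^ 2 =
      (m : ℝ) * k ^ 2 + ∑ e, ∑ f ∈ univ.erase e, ((E e ∩ E f).card : ℝ) ^ 2 := by
    have h1 := trace_sq_eq_sum_eigs_sq hQ
    have h2 : (inc E * (inc E)ᵀ) * (inc E * (inc E)ᵀ) =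
        inc E * (((inc E)ᵀ * inc E) * (inc E)ᵀ) := by
      simp only [Matrix.mul_assoc]
    have h3 : ((inc E * (inc E)ᵀ) * (inc E * (inc E)ᵀ)).trace
        = (((inc E)ᵀ * inc E) * ((inc E)ᵀ * inc E)).trace := by
      rw [h2, Matrix.trace_mul_comm]
      simp only [Matrix.mul_assoc]
    have hMeq : (inc E)ᵀ * inc E = fun e f => ((E e ∩ E f).card : ℝ) := by
      ext e f; exact inc_tr_mul E e f
    have h4 : (((inc E)ᵀ * inc E) * ((inc E)ᵀ * inc E)).trace =
        ∑ e, ∑ f, ((E e ∩ E f).card : ℝ) ^ 2 := by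
      rw [hMeq]
      simp only [Matrix.trace, Matrix.diag, Matrix.mul_apply]
      refine Finset.sum_congr rfl fun e _ => (Matrix.mul_apply).trans <| Finset.sum_congr rfl fun f _ => ?_
      rw [Finset.inter_comm (E f) (E e), sq]
    have h5 : ∑ e, ∑ f, ((E e ∩ E f).card : ℝ) ^ 2 =
        (m : ℝ) * k ^ 2 + ∑ e, ∑ f ∈ univ.erase e, ((E e ∩ E f).card : ℝ) ^ 2 := by
      have : ∀ e : Fin m, ∑ f, ((E e ∩ E f).card : ℝ) ^ 2 =
          (k : ℝ) ^ 2 + ∑ f ∈ univ.erase e, ((E e ∩ E f).card : ℝ) ^ 2 := by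
        intro e
        rw [← Finset.add_sum_erase univ _ (Finset.mem_univ e), Finset.inter_self, hk]
      rw [Finset.sum_congr rfl fun e _ => this e, Finset.sum_add_distrib, Finset.sum_const,
        Finset.card_univ, Fintype.card_fin, nsmul_eq_mul]
    rw [← h1, h3, h4, h5]
  -- Cauchy-Schwarz for sqrt
  have hCS : (∑ i, Real.sqrt (lam i)) ^ 2 ≤ (r : ℝ) * ((m : ℝ) * k) := by
    calc (∑ i, Real.sqrt (lam i)) ^ 2 = (∑ i ∈ S, Real.sqrt (lam i)) ^ 2 := by rw [hsqrtS]
      _ ≤ S.card * ∑ i ∈ S, Real.sqrt (lam i) ^ 2 := sq_sum_le_card_mul_sum_sq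
      _ = (r : ℝ) * ∑ i ∈ S, lam i := by
          rw [hrS, Finset.sum_congr rfl fun i _ => Real.sq_sqrt (hnn i)]
      _ = (r : ℝ) * ((m : ℝ) * k) := by rw [hlamS, htr]
  have hsqrt_nonneg : 0 ≤ ∑ i, Real.sqrt (lam i) :=
    Finset.sum_nonneg fun i _ => Real.sqrt_nonneg _
  have hmnn : (0:ℝ) ≤ m := Nat.cast_nonneg m
  have hrnn : (0:ℝ) ≤ r := Nat.cast_nonneg r
  refine ⟨?_, ?_, ?_⟩
  · -- first inequality
    rw [Real.le_sqrt hsqrt_nonneg (by positivity)]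
    calc (∑ i, Real.sqrt (lam i)) ^ 2 ≤ (r : ℝ) * ((m : ℝ) * k) := hCS
      _ = (k : ℝ) * m * r := by ring
  · -- second inequality
    have h6 : (k : ℝ) * m * r ≤ (k : ℝ) * ((m : ℝ) * m) := by
      have h : (r : ℝ) ≤ m := Nat.cast_le.mpr hrm
      calc (k : ℝ) * m * r = ((k : ℝ) * m) * r := by ring
        _ ≤ ((k : ℝ) * m) * m := by
            exact mul_le_mul_of_nonneg_left h (by positivity)
        _ = (k : ℝ) * ((m : ℝ) * m) := by ring
    calc Real.sqrt ((k : ℝ) * m * r) ≤ Real.sqrt ((k : ℝ) * ((m : ℝ) * m)) :=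
          Real.sqrt_le_sqrt h6
      _ = Real.sqrt k * m := by
          rw [Real.sqrt_mul hkR.le, Real.sqrt_mul_self hmnn]
  · -- equality case
    by_cases hm : m = 0
    · subst hm
      have hall : ∀ i, lam i = 0 := by
        have := (Finset.sum_eq_zero_iff_of_nonneg (fun i _ => hnn i)).mp
          (by rw [htr]; norm_num)
        exact fun i => this i (Finset.mem_univ i)
      constructor
      · intro _ e _ _; exact absurd e.isLt (by omega)
      · intro _
        simp [hall]
    · have hmR : (0:ℝ) < m := by positivity
      constructor
      · -- equality → disjoint
        intro heq
        -- r = m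
        have h7 : (k : ℝ) * m * m ≤ (r : ℝ) * ((m : ℝ) * k) := by
          have h8 : (Real.sqrt k * m) ^ 2 = (k : ℝ) * m * m := by
            rw [mul_pow, Real.sq_sqrt hkR.le]; ring
          rw [← h8, ← heq]; exact hCS
        have hrm2 : r = m := by
          refine le_antisymm hrm ?_
          have hmr : (m : ℝ) ≤ r := by
            have hpos : (0:ℝ) < (m : ℝ) * k := by positivity
            rw [← mul_le_mul_iff_of_pos_right hpos]
            calc (m:ℝ) * ((m:ℝ) * k) = (k : ℝ) * m * m := by ring
              _ ≤ (r : ℝ) * ((m : ℝ) * k) := h7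
          exact_mod_cast hmr
        -- sum of squares is zero
        have hz : ∑ i ∈ S, (Real.sqrt (lam i) - Real.sqrt k) ^ 2 = 0 := by
          have expand : ∀ i ∈ S, (Real.sqrt (lam i) - Real.sqrt k) ^ 2 =
              lam i - 2 * Real.sqrt k * Real.sqrt (lam i) + k := by
            intro i _
            rw [sub_sq, Real.sq_sqrt (hnn i), Real.sq_sqrt hkR.le]
            ring
          rw [Finset.sum_congr rfl expand, Finset.sum_add_distrib, Finset.sum_sub_distrib,
            ← Finset.mul_sum, Finset.sum_const, hlamS, htr, hsqrtS, heq, hrS, hrm2,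
            nsmul_eq_mul]
          have hsk : Real.sqrt k * Real.sqrt k = k := Real.mul_self_sqrt hkR.le
          nlinarith
        have hlamk : ∀ i ∈ S, lam i = k := by
          intro i hi
          have h0 := (Finset.sum_eq_zero_iff_of_nonneg (fun j _ => sq_nonneg _)).mp hz i hi
          have h1 : Real.sqrt (lam i) = Real.sqrt k := by
            have := sub_eq_zero.mp (pow_eq_zero_iff two_ne_zero |>.mp h0)
            linarith
          calc lam i = Real.sqrt (lam i) ^ 2 := (Real.sq_sqrt (hnn i)).symm
            _ = (k : ℝ) := by rw [h1, Real.sq_sqrt hkR.le]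
        have hsum2 : ∑ i, lam i ^ 2 = (m : ℝ) * k ^ 2 := by
          have : ∀ i, lam i ^ 2 = k * lam i := by
            intro i
            by_cases hi : i ∈ S
            · rw [hlamk i hi]; ring
            · rw [hS0 i hi]; ring
          rw [Finset.sum_congr rfl fun i _ => this i, ← Finset.mul_sum, htr]
          ring
        have hoff : ∑ e, ∑ f ∈ univ.erase e, ((E e ∩ E f).card : ℝ) ^ 2 = 0 := by
          rw [hsum2] at htr2; linarith
        intro e f hef
        have h6 := (Finset.sum_eq_zero_iff_of_nonneg
          (fun _ _ => Finset.sum_nonneg fun _ _ => sq_nonneg _)).mp hoff e (Finset.mem_univ e)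
        have h5 := (Finset.sum_eq_zero_iff_of_nonneg (fun _ _ => sq_nonneg _)).mp h6 f
          (Finset.mem_erase.mpr ⟨Ne.symm hef, Finset.mem_univ f⟩)
        have h9 : ((E e ∩ E f).card : ℝ) = 0 := pow_eq_zero_iff two_ne_zero |>.mp h5
        have h10 : (E e ∩ E f).card = 0 := by exact_mod_cast h9
        exact Finset.disjoint_iff_inter_eq_empty.mpr (Finset.card_eq_zero.mp h10)
      · -- disjoint → equality
        intro hdisj
        have hoff : ∑ e, ∑ f ∈ univ.erase e, ((E e ∩ E f).card : ℝ) ^ 2 = 0 := by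
          refine Finset.sum_eq_zero fun e _ => Finset.sum_eq_zero fun f hf => ?_
          rw [Finset.disjoint_iff_inter_eq_empty.mp
            (hdisj e f (Ne.symm (Finset.mem_erase.mp hf).1))]
          simp
        have hsum2 : ∑ i, lam i ^ 2 = (m : ℝ) * k ^ 2 := by rw [htr2, hoff, add_zero]
        have hCS2 : ((m : ℝ) * k) ^ 2 ≤ (r : ℝ) * ((m : ℝ) * k ^ 2) := by
          calc ((m : ℝ) * k) ^ 2 = (∑ i ∈ S, lam i) ^ 2 := by rw [hlamS, htr]
            _ ≤ S.card * ∑ i ∈ S, lam i ^ 2 := sq_sum_le_card_mul_sum_sq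
            _ = (r : ℝ) * ((m : ℝ) * k ^ 2) := by rw [hrS, hlam2S, hsum2]
        have hrm2 : r = m := by
          refine le_antisymm hrm ?_
          have hmr : (m : ℝ) ≤ r := by
            have hpos : (0:ℝ) < (m : ℝ) * k ^ 2 := by positivity
            rw [← mul_le_mul_iff_of_pos_right hpos]
            calc (m:ℝ) * ((m:ℝ) * k ^ 2) = ((m : ℝ) * k) ^ 2 := by ring
              _ ≤ (r : ℝ) * ((m : ℝ) * k ^ 2) := hCS2
          exact_mod_cast hmr
        have hz : ∑ i ∈ S, (lam i - k) ^ 2 = 0 := by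
          have expand : ∀ i ∈ S, (lam i - k) ^ 2 = lam i ^ 2 - 2 * k * lam i + k ^ 2 := by
            intro i _; ring
          rw [Finset.sum_congr rfl expand, Finset.sum_add_distrib, Finset.sum_sub_distrib,
            ← Finset.mul_sum, Finset.sum_const, hlamS, htr, hlam2S, hsum2, hrS, hrm2,
            nsmul_eq_mul]
          ring
        have hlamk : ∀ i ∈ S, lam i = k := by
          intro i hi
          have h0 := (Finset.sum_eq_zero_iff_of_nonneg (fun j _ => sq_nonneg _)).mp hz i hi
          have := sub_eq_zero.mp (pow_eq_zero_iff two_ne_zero |>.mp h0)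
          linarith
        calc ∑ i, Real.sqrt (lam i) = ∑ i ∈ S, Real.sqrt (lam i) := hsqrtS.symm
          _ = ∑ i ∈ S, Real.sqrt k := Finset.sum_congr rfl fun i hi => by rw [hlamk i hi]
          _ = (S.card : ℝ) * Real.sqrt k := by rw [Finset.sum_const, nsmul_eq_mul]
          _ = Real.sqrt k * m := by rw [hrS, hrm2]; ring
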